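/- For every n ≥ 3 there exists a strong tournament on n vertices with exactly 3 minimal feedback vertex sets. -/
import Mathlib


/-- A set `W` of vertices is acyclic if the digraph `r` restricted to `W`
has no directed cycle (the transitive closure restricted to `W` is irreflexive). -/
def AcyclicOn {V : Type*} (r : V → V → Prop) (W : Set V) : Prop :=
  ∀ v : V, ¬ Relation.TransGen (fun a b => a ∈ W ∧ b ∈ W ∧ r a b) v v

/-- A tournament: an irreflexive relation with exactly one arc between
every pair of distinct vertices. -/
def IsTournament {V : Type*} (r : V → V → Prop) : Prop :=
  (∀ v : V, ¬ r v v) ∧ ∀ u v : V, u ≠ v → (r u v ↔ ¬ r v u)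

/-- A feedback vertex set: its deletion leaves an acyclic digraph. -/
def IsFVS {V : Type*} (r : V → V → Prop) (F : Set V) : Prop :=
  AcyclicOn r Fᶜ

/-- A minimal feedback vertex set. -/
def IsMinimalFVS {V : Type*} (r : V → V → Prop) (F : Set V) : Prop :=
  IsFVS r F ∧ ∀ F' : Set V, F' ⊆ F → IsFVS r F' → F' = F

/-- A feedback vertex set of the subtournament induced on `S`. -/
def IsFVSOn {V : Type*} (r : V → V → Prop) (S F : Set V) : Prop :=
  F ⊆ S ∧ AcyclicOn r (S \ F)

/-- A minimal feedback vertex set of the subtournament induced on `S`. -/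
def IsMinimalFVSOn {V : Type*} (r : V → V → Prop) (S F : Set V) : Prop :=
  IsFVSOn r S F ∧ ∀ F' : Set V, F' ⊆ F → IsFVSOn r S F' → F' = F

/-- Strong (strongly connected): a directed path between any ordered pair. -/
def IsStrong {V : Type*} (r : V → V → Prop) : Prop :=
  ∀ u v : V, Relation.ReflTransGen r u v

/-- The subtournament induced on `S` is strong. -/
def IsStrongOn {V : Type*} (r : V → V → Prop) (S : Set V) : Prop :=
  ∀ u ∈ S, ∀ v ∈ S, Relation.ReflTransGen (fun a b => a ∈ S ∧ b ∈ S ∧ r a b) u v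

/-- The score (out-degree) of a vertex. -/
noncomputable def outScore {V : Type*} (r : V → V → Prop) (v : V) : ℕ :=
  {u : V | r v u}.ncard

/-- The number of minimal feedback vertex sets of a tournament. -/
noncomputable def fvsCount (V : Type*) (r : V → V → Prop) : ℕ :=
  {F : Set V | IsMinimalFVS r F}.ncard

/-- `maxMinFVS n` = maximum number of minimal FVSs over all `n`-vertex tournaments. -/
noncomputable def maxMinFVS (n : ℕ) : ℕ :=
  sSup {k : ℕ | ∃ r : Fin n → Fin n → Prop, IsTournament r ∧ fvsCount (Fin n) r = k}


def myR (n : ℕ) (a b : Fin n) : Prop :=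
  (a.val < n-2 ∧ b.val < n-2 ∧ a.val < b.val) ∨ (a.val < n-2 ∧ b.val = n-2) ∨
  (a.val = n-2 ∧ b.val = n-1) ∨ (a.val = n-1 ∧ b.val < n-2)

lemma rank_acyclic {V : Type*} (r : V → V → Prop) (S : Set V) (f : V → ℕ)
    (h : ∀ a b, a ∈ S → b ∈ S → r a b → f a < f b) : AcyclicOn r S := by
  intro v hv
  have key : ∀ x y : V, Relation.TransGen (fun a b => a ∈ S ∧ b ∈ S ∧ r a b) x y → f x < f y := by
    intro x y h'
    induction h' with
    | single h'' => exact h _ _ h''.1 h''.2.1 h''.2.2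
    | tail _ h'' ih => exact ih.trans (h _ _ h''.1 h''.2.1 h''.2.2)
  exact absurd (key v v hv) (lt_irrefl _)

lemma myR_tournament (n : ℕ) (hn : 3 ≤ n) : IsTournament (myR n) := by
  constructor
  · intro v
    simp only [myR]
    omega
  · intro u v huv
    have h : u.val ≠ v.val := fun h => huv (Fin.ext h)
    have hu := u.isLt
    have hv := v.isLt
    simp only [myR]
    omega

lemma myR_fvs_iff (n : ℕ) (hn : 3 ≤ n) (F : Set (Fin n)) :
    IsFVS (myR n) F ↔
      ((⟨n-2, by omega⟩ : Fin n) ∈ F ∨ (⟨n-1, by omega⟩ : Fin n) ∈ F ∨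
        ∀ x : Fin n, x.val < n-2 → x ∈ F) := by
  constructor
  · intro hF
    by_contra hc
    push_neg at hc
    obtain ⟨hU, hW, c, hc1, hc2⟩ := hc
    have e1 : ((⟨n-2, by omega⟩ : Fin n) ∈ Fᶜ ∧ (⟨n-1, by omega⟩ : Fin n) ∈ Fᶜ ∧
        myR n ⟨n-2, by omega⟩ ⟨n-1, by omega⟩) :=
      ⟨hU, hW, Or.inr (Or.inr (Or.inl ⟨rfl, rfl⟩))⟩
    have e2 : ((⟨n-1, by omega⟩ : Fin n) ∈ Fᶜ ∧ c ∈ Fᶜ ∧ myR n ⟨n-1, by omega⟩ c) :=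
      ⟨hW, hc2, Or.inr (Or.inr (Or.inr ⟨rfl, hc1⟩))⟩
    have e3 : (c ∈ Fᶜ ∧ (⟨n-2, by omega⟩ : Fin n) ∈ Fᶜ ∧ myR n c ⟨n-2, by omega⟩) :=
      ⟨hc2, hU, Or.inr (Or.inl ⟨hc1, rfl⟩)⟩
    have t1 : Relation.TransGen (fun a b : Fin n => a ∈ Fᶜ ∧ b ∈ Fᶜ ∧ myR n a b)
        ⟨n-2, by omega⟩ ⟨n-1, by omega⟩ := Relation.TransGen.single e1
    have t2 : Relation.TransGen (fun a b : Fin n => a ∈ Fᶜ ∧ b ∈ Fᶜ ∧ myR n a b)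
        ⟨n-2, by omega⟩ c := t1.tail e2
    have t3 : Relation.TransGen (fun a b : Fin n => a ∈ Fᶜ ∧ b ∈ Fᶜ ∧ myR n a b)
        ⟨n-2, by omega⟩ ⟨n-2, by omega⟩ := t2.tail e3
    exact hF _ t3
  · rintro (hU | hW | hC)
    · apply rank_acyclic (myR n) Fᶜ (fun x => if x.val = n-1 then 0 else x.val + 1)
      intro a b ha hb hr
      have ha2 : a.val ≠ n-2 := by
        intro h
        exact ha (show a ∈ F from (Fin.ext h : a = ⟨n-2, by omega⟩) ▸ hU)
      have hb2 : b.val ≠ n-2 := by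
        intro h
        exact hb (show b ∈ F from (Fin.ext h : b = ⟨n-2, by omega⟩) ▸ hU)
      simp only [myR] at hr
      have := a.isLt; have := b.isLt
      split_ifs <;> omega
    · apply rank_acyclic (myR n) Fᶜ (fun x => if x.val = n-2 then n else x.val)
      intro a b ha hb hr
      have ha2 : a.val ≠ n-1 := by
        intro h
        exact ha (show a ∈ F from (Fin.ext h : a = ⟨n-1, by omega⟩) ▸ hW)
      have hb2 : b.val ≠ n-1 := by
        intro h
        exact hb (show b ∈ F from (Fin.ext h : b = ⟨n-1, by omega⟩) ▸ hW)
      simp only [myR] at hr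
      have := a.isLt; have := b.isLt
      split_ifs <;> omega
    · apply rank_acyclic (myR n) Fᶜ (fun x => x.val)
      intro a b ha hb hr
      have ha2 : ¬ a.val < n-2 := fun h => ha (hC a h)
      have hb2 : ¬ b.val < n-2 := fun h => hb (hC b h)
      simp only [myR] at hr
      omega


/-- For every `n ≥ 3` there is a strong tournament on `n` vertices with
exactly 3 minimal feedback vertex sets. -/
theorem stmt2 (n : ℕ) (hn : 3 ≤ n) :
    ∃ r : Fin n → Fin n → Prop, IsTournament r ∧ IsStrong r ∧
      {F : Set (Fin n) | IsMinimalFVS r F}.ncard = 3 := by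
  have hU2 : n - 2 < n := by omega
  have hW2 : n - 1 < n := by omega
  have hZ2 : 0 < n := by omega
  let U : Fin n := ⟨n-2, hU2⟩
  let W : Fin n := ⟨n-1, hW2⟩
  let Z : Fin n := ⟨0, hZ2⟩
  let C : Set (Fin n) := {x : Fin n | x.val < n-2}
  refine ⟨myR n, myR_tournament n hn, ?_, ?_⟩
  · -- strong
    have toU : ∀ a : Fin n, Relation.ReflTransGen (myR n) a U := by
      intro a
      have ha := a.isLt
      rcases lt_trichotomy a.val (n-2) with h | h | h
      · exact Relation.ReflTransGen.single (Or.inr (Or.inl ⟨h, rfl⟩))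
      · exact (Fin.ext h : a = U) ▸ Relation.ReflTransGen.refl
      · have haW : a.val = n-1 := by omega
        have s1 : myR n a Z := Or.inr (Or.inr (Or.inr ⟨haW, show (0:ℕ) < n-2 by omega⟩))
        have s2 : myR n Z U := Or.inr (Or.inl ⟨show (0:ℕ) < n-2 by omega, rfl⟩)
        exact (Relation.ReflTransGen.single s1).tail s2
    have fromU : ∀ b : Fin n, Relation.ReflTransGen (myR n) U b := by
      intro b
      have hb := b.isLt
      rcases lt_trichotomy b.val (n-2) with h | h | h
      · have s1 : myR n U W := Or.inr (Or.inr (Or.inl ⟨rfl, rfl⟩))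
        have s2 : myR n W b := Or.inr (Or.inr (Or.inr ⟨rfl, h⟩))
        exact (Relation.ReflTransGen.single s1).tail s2
      · exact (Fin.ext h : b = U) ▸ Relation.ReflTransGen.refl
      · have hbW : b = W := Fin.ext (show b.val = n-1 by omega)
        exact hbW ▸ Relation.ReflTransGen.single (Or.inr (Or.inr (Or.inl ⟨rfl, rfl⟩)))
    intro a b
    exact (toU a).trans (fromU b)
  · -- count
    have hUW : U ≠ W := by
      intro h
      have : n - 2 = n - 1 := congrArg Fin.val h
      omega
    have hZU : Z ≠ U := by
      intro h
      have : (0:ℕ) = n - 2 := congrArg Fin.val h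
      omega
    have hZW : Z ≠ W := by
      intro h
      have : (0:ℕ) = n - 1 := congrArg Fin.val h
      omega
    have hUC : U ∉ C := show ¬ (n-2) < n-2 by omega
    have hWC : W ∉ C := show ¬ (n-1) < n-2 by omega
    have hZC : Z ∈ C := show (0:ℕ) < n-2 by omega
    have fvsU : IsFVS (myR n) {U} := (myR_fvs_iff n hn _).mpr (Or.inl rfl)
    have fvsW : IsFVS (myR n) {W} := (myR_fvs_iff n hn _).mpr (Or.inr (Or.inl rfl))
    have fvsC : IsFVS (myR n) C := (myR_fvs_iff n hn _).mpr (Or.inr (Or.inr (fun x h => h)))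
    have notfvs : ∀ F : Set (Fin n), IsFVS (myR n) F → U ∉ F → W ∉ F → C ⊆ F := by
      intro F hF hU hW
      rcases (myR_fvs_iff n hn F).mp hF with h | h | h
      · exact absurd h hU
      · exact absurd h hW
      · exact fun x hx => h x hx
    have hset : {F : Set (Fin n) | IsMinimalFVS (myR n) F} = {{U}, {W}, C} := by
      ext F
      simp only [Set.mem_setOf_eq, Set.mem_insert_iff, Set.mem_singleton_iff]
      constructor
      · rintro ⟨hF, hmin⟩
        by_cases hU : U ∈ F
        · left
          exact (hmin {U} (Set.singleton_subset_iff.mpr hU) fvsU).symm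
        by_cases hW : W ∈ F
        · right; left
          exact (hmin {W} (Set.singleton_subset_iff.mpr hW) fvsW).symm
        · right; right
          exact (hmin C (notfvs F hF hU hW) fvsC).symm
      · rintro (rfl | rfl | rfl)
        · refine ⟨fvsU, fun F' hsub hF' => ?_⟩
          have hmem : U ∈ F' := by
            by_contra hU
            have hW : W ∉ F' := fun h => hUW (Set.eq_of_mem_singleton (hsub h)).symm
            exact hZU (Set.eq_of_mem_singleton (hsub (notfvs F' hF' hU hW hZC)))
          exact Set.Subset.antisymm hsub (Set.singleton_subset_iff.mpr hmem)
        · refine ⟨fvsW, fun F' hsub hF' => ?_⟩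
          have hmem : W ∈ F' := by
            by_contra hW
            have hU : U ∉ F' := fun h => hUW (Set.eq_of_mem_singleton (hsub h))
            exact hZW (Set.eq_of_mem_singleton (hsub (notfvs F' hF' hU hW hZC)))
          exact Set.Subset.antisymm hsub (Set.singleton_subset_iff.mpr hmem)
        · refine ⟨fvsC, fun F' hsub hF' => ?_⟩
          have hU : U ∉ F' := fun h => hUC (hsub h)
          have hW : W ∉ F' := fun h => hWC (hsub h)
          exact Set.Subset.antisymm hsub (notfvs F' hF' hU hW)
    rw [hset, Set.ncard_eq_three]
    refine ⟨{U}, {W}, C, ?_, ?_, ?_, rfl⟩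
    · intro h
      exact hUW (Set.singleton_eq_singleton_iff.mp h)
    · intro h
      exact hUC (h ▸ rfl)
    · intro h
      exact hWC (h ▸ rfl)
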